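/- For positive integers a ≤ b and any integer k with 2 ≤ k ≤ b-a+2, the k-connectivity of the complete bipartite graph K_{a,b} equals a. -/

import Mathlib

/-- `ℓ` pairwise edge-disjoint trees in `G`, each containing `S`, whose pairwise
vertex intersections equal exactly `S` (an internally disjoint set of trees connecting `S`). -/
def InternallyDisjointTrees {V : Type*} (G : SimpleGraph V) (S : Set V) (ℓ : ℕ) : Prop :=
  ∃ T : Fin ℓ → G.Subgraph,
    (∀ n, (T n).coe.IsTree) ∧
    (∀ n, S ⊆ (T n).verts) ∧
    (∀ m n, m ≠ n → (T m).verts ∩ (T n).verts = S) ∧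
    (∀ m n, m ≠ n → (T m).edgeSet ∩ (T n).edgeSet = ∅)

/-- `κ(S)`: the maximum number of internally disjoint trees connecting `S`. -/
noncomputable def kappaS {V : Type*} (G : SimpleGraph V) (S : Set V) : ℕ :=
  sSup {ℓ | InternallyDisjointTrees G S ℓ}

/-- The `k`-connectivity `κ_k(G)`: the minimum of `κ(S)` over all `k`-subsets `S`. -/
noncomputable def kappaK {V : Type*} (G : SimpleGraph V) (k : ℕ) : ℕ :=
  sInf {n | ∃ S : Set V, S.ncard = k ∧ kappaS G S = n}

open SimpleGraph

lemma cycle_two_neighbors {V : Type*} {G : SimpleGraph V} {v : V} {c : G.Walk v v}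
    (hc : c.IsCycle) : ∃ x y, x ≠ y ∧ G.Adj v x ∧ G.Adj v y := by
  cases c with
  | nil => exact absurd hc Walk.IsCycle.not_of_nil
  | cons h p =>
    rename_i x
    have hlen : 3 ≤ p.length + 1 := by simpa using hc.three_le_length
    have hne : p.darts ≠ [] := by
      rw [← List.length_pos_iff_ne_nil, Walk.length_darts]; omega
    refine ⟨x, (p.darts.getLast hne).fst, ?_, h, ?_⟩
    · intro hx
      have hsnd : (p.darts.getLast hne).snd = v := by rw [p.getLast_darts_eq_lastDart hne]; rfl
      have hedge : (p.darts.getLast hne).edge = s(v, x) := by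
        have : (p.darts.getLast hne).toProd = (x, v) := by
          ext
          · exact hx.symm
          · exact hsnd
        rw [Dart.edge, this, Sym2.eq_swap]
      have hmem : s(v, x) ∈ p.edges := by
        rw [← hedge]; exact List.mem_map_of_mem (f := Dart.edge) (List.getLast_mem hne)
      have hnd : (Walk.cons h p).edges.Nodup := hc.isCircuit.isTrail.edges_nodup
      rw [Walk.edges_cons, List.nodup_cons] at hnd
      exact hnd.1 hmem
    · have hd := (p.darts.getLast hne).adj
      rw [show (p.darts.getLast hne).snd = v by rw [p.getLast_darts_eq_lastDart hne]; rfl] at hd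
      exact hd.symm

variable {α β : Type*}

def dstar (c₁ : α) (c₂ : β) (X : Set β) (Y : Set α) :
    (completeBipartiteGraph α β).Subgraph where
  verts := Sum.inl '' insert c₁ Y ∪ Sum.inr '' insert c₂ X
  Adj v w :=
    (v = Sum.inl c₁ ∧ ∃ x ∈ insert c₂ X, w = Sum.inr x) ∨
    (w = Sum.inl c₁ ∧ ∃ x ∈ insert c₂ X, v = Sum.inr x) ∨
    (v = Sum.inr c₂ ∧ ∃ y ∈ insert c₁ Y, w = Sum.inl y) ∨
    (w = Sum.inr c₂ ∧ ∃ y ∈ insert c₁ Y, v = Sum.inl y)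
  adj_sub := by
    rintro v w (⟨rfl, x, hx, rfl⟩|⟨rfl, x, hx, rfl⟩|⟨rfl, y, hy, rfl⟩|⟨rfl, y, hy, rfl⟩) <;>
      simp [completeBipartiteGraph]
  edge_vert := by
    rintro v w (⟨rfl, x, hx, rfl⟩|⟨rfl, x, hx, rfl⟩|⟨rfl, y, hy, rfl⟩|⟨rfl, y, hy, rfl⟩)
    · exact Or.inl ⟨c₁, Set.mem_insert _ _, rfl⟩
    · exact Or.inr ⟨x, hx, rfl⟩
    · exact Or.inr ⟨c₂, Set.mem_insert _ _, rfl⟩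
    · exact Or.inl ⟨y, hy, rfl⟩
  symm := by
    constructor
    rintro v w (⟨h1, x, hx, h2⟩|⟨h1, x, hx, h2⟩|⟨h1, y, hy, h2⟩|⟨h1, y, hy, h2⟩)
    · exact Or.inr (Or.inl ⟨h1, x, hx, h2⟩)
    · exact Or.inl ⟨h1, x, hx, h2⟩
    · exact Or.inr (Or.inr (Or.inr ⟨h1, y, hy, h2⟩))
    · exact Or.inr (Or.inr (Or.inl ⟨h1, y, hy, h2⟩))

lemma dstar_verts (c₁ : α) (c₂ : β) (X : Set β) (Y : Set α) :
    (dstar c₁ c₂ X Y).verts = Sum.inl '' insert c₁ Y ∪ Sum.inr '' insert c₂ X := rfl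

lemma dstar_adj_iff (c₁ : α) (c₂ : β) (X : Set β) (Y : Set α) {v w : α ⊕ β} :
    (dstar c₁ c₂ X Y).Adj v w ↔
    (v = Sum.inl c₁ ∧ ∃ x ∈ insert c₂ X, w = Sum.inr x) ∨
    (w = Sum.inl c₁ ∧ ∃ x ∈ insert c₂ X, v = Sum.inr x) ∨
    (v = Sum.inr c₂ ∧ ∃ y ∈ insert c₁ Y, w = Sum.inl y) ∨
    (w = Sum.inr c₂ ∧ ∃ y ∈ insert c₁ Y, v = Sum.inl y) := Iff.rfl

section DStar
variable {α β : Type*} {c₁ : α} {c₂ : β} {X : Set β} {Y : Set α}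

lemma mem_verts_hub1 : Sum.inl c₁ ∈ (dstar c₁ c₂ X Y).verts :=
  Or.inl ⟨c₁, Set.mem_insert _ _, rfl⟩

lemma mem_verts_hub2 : Sum.inr c₂ ∈ (dstar c₁ c₂ X Y).verts :=
  Or.inr ⟨c₂, Set.mem_insert _ _, rfl⟩

lemma dstar_isTree : (dstar c₁ c₂ X Y).coe.IsTree := by
  classical
  set H := dstar c₁ c₂ X Y with hH
  let hub1 : H.verts := ⟨Sum.inl c₁, mem_verts_hub1⟩
  let hub2 : H.verts := ⟨Sum.inr c₂, mem_verts_hub2⟩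
  have hadj12 : H.coe.Adj hub2 hub1 :=
    Or.inr (Or.inl ⟨rfl, c₂, Set.mem_insert _ _, rfl⟩)
  have reach : ∀ u : H.verts, H.coe.Reachable u hub1 := by
    rintro ⟨u, hu⟩
    rcases hu with ⟨y, hy, rfl⟩ | ⟨x, hx, rfl⟩
    · have h1 : H.coe.Adj ⟨Sum.inl y, Or.inl ⟨y, hy, rfl⟩⟩ hub2 :=
        Or.inr (Or.inr (Or.inr ⟨rfl, y, hy, rfl⟩))
      exact h1.reachable.trans hadj12.reachable
    · have h1 : H.coe.Adj ⟨Sum.inr x, Or.inr ⟨x, hx, rfl⟩⟩ hub1 :=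
        Or.inr (Or.inl ⟨rfl, x, hx, rfl⟩)
      exact h1.reachable
  constructor
  · haveI : Nonempty ↥H.verts := ⟨hub1⟩
    exact ⟨fun u v => (reach u).trans (reach v).symm⟩
  · -- acyclic
    intro v c hc
    have hnb : ∀ w : H.verts, w ≠ hub1 → w ≠ hub2 →
        ∀ x y : H.verts, H.coe.Adj w x → H.coe.Adj w y → x = y := by
      rintro ⟨w, hw⟩ hw1 hw2 x y hx hy
      have key : ∀ z : H.verts, H.coe.Adj ⟨w, hw⟩ z →
          (z = hub1 ∧ (∃ t, w = Sum.inr t)) ∨ (z = hub2 ∧ ∃ t, w = Sum.inl t) := by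
        rintro ⟨z, hz⟩ (⟨h1, _⟩|⟨h1, x', _, h2⟩|⟨h1, _⟩|⟨h1, y', _, h2⟩)
        · exact absurd (Subtype.ext h1 : (⟨w, hw⟩ : H.verts) = hub1) hw1
        · exact Or.inl ⟨Subtype.ext h1, x', h2⟩
        · exact absurd (Subtype.ext h1 : (⟨w, hw⟩ : H.verts) = hub2) hw2
        · exact Or.inr ⟨Subtype.ext h1, y', h2⟩
      rcases key x hx with ⟨rfl, hu⟩ | ⟨rfl, hu⟩ <;> rcases key y hy with ⟨rfl, ht⟩ | ⟨rfl, ht⟩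
      · rfl
      · rcases hu with ⟨t, rfl⟩; rcases ht with ⟨t', h⟩; simp at h
      · rcases hu with ⟨t, rfl⟩; rcases ht with ⟨t', h⟩; simp at h
      · rfl
    have hexists : ∃ w ∈ c.support, w ≠ hub1 ∧ w ≠ hub2 := by
      by_contra hall
      push_neg at hall
      have hnd := hc.support_nodup
      have hlen : 3 ≤ c.length := hc.three_le_length
      have hsub : c.support.tail ⊆ c.support := List.tail_subset _
      have hsubset : c.support.tail.toFinset ⊆ {hub1, hub2} := by
        intro w hw
        by_cases h1 : w = hub1
        · simp [h1]
        · simp [hall w (hsub (List.mem_toFinset.mp hw)) h1]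
      have hcard : c.support.tail.toFinset.card ≤ 2 :=
        le_trans (Finset.card_le_card hsubset)
          ((Finset.card_insert_le _ _).trans (by simp))
      rw [List.toFinset_card_of_nodup hnd] at hcard
      have hlt : c.support.length = c.length + 1 := c.length_support
      have : c.support.tail.length = c.length := by
        rw [List.length_tail, hlt]; omega
      omega
    obtain ⟨w, hwmem, hw1, hw2⟩ := hexists
    have hc2 := hc.rotate hwmem
    obtain ⟨x, y, hxy, hx, hy⟩ := cycle_two_neighbors hc2
    exact hxy (hnb w hw1 hw2 x y hx hy)

lemma dstar_edgeSet {e : Sym2 (α ⊕ β)} :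
    e ∈ (dstar c₁ c₂ X Y).edgeSet ↔
    (∃ x ∈ insert c₂ X, e = s(Sum.inl c₁, Sum.inr x)) ∨
    (∃ y ∈ insert c₁ Y, e = s(Sum.inr c₂, Sum.inl y)) := by
  induction e using Sym2.ind with
  | _ u v =>
    rw [SimpleGraph.Subgraph.mem_edgeSet]
    constructor
    · rintro (⟨rfl, x, hx, rfl⟩|⟨rfl, x, hx, rfl⟩|⟨rfl, y, hy, rfl⟩|⟨rfl, y, hy, rfl⟩)
      · exact Or.inl ⟨x, hx, rfl⟩
      · exact Or.inl ⟨x, hx, Sym2.eq_swap⟩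
      · exact Or.inr ⟨y, hy, rfl⟩
      · exact Or.inr ⟨y, hy, Sym2.eq_swap⟩
    · rintro (⟨x, hx, h⟩|⟨y, hy, h⟩)
      · rw [Sym2.eq_iff] at h
        rcases h with ⟨rfl, rfl⟩|⟨rfl, rfl⟩
        · exact Or.inl ⟨rfl, x, hx, rfl⟩
        · exact Or.inr (Or.inl ⟨rfl, x, hx, rfl⟩)
      · rw [Sym2.eq_iff] at h
        rcases h with ⟨rfl, rfl⟩|⟨rfl, rfl⟩
        · exact Or.inr (Or.inr (Or.inl ⟨rfl, y, hy, rfl⟩))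
        · exact Or.inr (Or.inr (Or.inr ⟨rfl, y, hy, rfl⟩))
end DStar

section Core
variable {a b : ℕ}

lemma core_construction (S : Set (Fin a ⊕ Fin b)) (ρ : Fin a → Fin b)
    (hρ1 : ∀ i j : Fin a, i ≠ j → ρ i = ρ j →
      ρ i ∈ Sum.inr ⁻¹' S ∧ Sum.inl ⁻¹' S = ∅)
    (hρ2 : ∀ i j : Fin a, i ≠ j → i ∈ Sum.inl ⁻¹' S →
      ρ j ≠ ρ i ∧ ρ j ∉ Sum.inr ⁻¹' S) :
    InternallyDisjointTrees (completeBipartiteGraph (Fin a) (Fin b)) S a := by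
  set A := Sum.inl ⁻¹' S with hA
  set B := Sum.inr ⁻¹' S with hB
  have hS : S = Sum.inl '' A ∪ Sum.inr '' B := by
    ext z
    cases z with
    | inl y => simp [hA]
    | inr x => simp [hB]
  refine ⟨fun i => dstar i (ρ i) B A, fun i => dstar_isTree, ?_, ?_, ?_⟩
  · -- S ⊆ verts
    intro i z hz
    rw [hS] at hz
    rcases hz with ⟨y, hy, rfl⟩ | ⟨x, hx, rfl⟩
    · exact Or.inl ⟨y, Set.mem_insert_of_mem _ hy, rfl⟩
    · exact Or.inr ⟨x, Set.mem_insert_of_mem _ hx, rfl⟩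
  · -- verts intersection
    intro m n hmn
    apply Set.Subset.antisymm
    · rintro z ⟨hzm, hzn⟩
      rcases hzm with ⟨y, hy, rfl⟩ | ⟨x, hx, rfl⟩
      · -- z = inl y
        have hy' : y ∈ insert n A := by
          rcases hzn with ⟨y', hy', hyy⟩ | ⟨x', _, hxx⟩
          · cases Sum.inl_injective hyy; exact hy'
          · exact absurd hxx (by simp)
        have : y ∈ A := by
          rcases hy with rfl | hy
          · rcases hy' with h | h
            · exact absurd h hmn
            · exact h
          · exact hy
        exact hS ▸ Or.inl ⟨y, this, rfl⟩
      · -- z = inr x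
        have hx' : x ∈ insert (ρ n) B := by
          rcases hzn with ⟨y', _, hyy⟩ | ⟨x', hx', hxx⟩
          · exact absurd hyy (by simp)
          · cases Sum.inr_injective hxx; exact hx'
        have : x ∈ B := by
          rcases hx with rfl | hx
          · rcases hx' with h | h
            · exact (hρ1 m n hmn h).1
            · exact h
          · exact hx
        exact hS ▸ Or.inr ⟨x, this, rfl⟩
    · intro z hz
      constructor
      · rw [hS] at hz
        rcases hz with ⟨y, hy, rfl⟩ | ⟨x, hx, rfl⟩
        · exact Or.inl ⟨y, Set.mem_insert_of_mem _ hy, rfl⟩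
        · exact Or.inr ⟨x, Set.mem_insert_of_mem _ hx, rfl⟩
      · rw [hS] at hz
        rcases hz with ⟨y, hy, rfl⟩ | ⟨x, hx, rfl⟩
        · exact Or.inl ⟨y, Set.mem_insert_of_mem _ hy, rfl⟩
        · exact Or.inr ⟨x, Set.mem_insert_of_mem _ hx, rfl⟩
  · -- edge disjointness
    intro m n hmn
    ext e
    simp only [Set.mem_inter_iff, Set.mem_empty_iff_false, iff_false, not_and]
    intro hem hen
    rw [dstar_edgeSet] at hem hen
    rcases hem with ⟨x, hx, rfl⟩ | ⟨y, hy, rfl⟩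
    · rcases hen with ⟨x', hx', h⟩ | ⟨y', hy', h⟩
      · rw [Sym2.eq_iff] at h
        rcases h with ⟨h1, h2⟩ | ⟨h1, h2⟩
        · exact hmn (Sum.inl_injective h1)
        · exact absurd h1 (by simp)
      · rw [Sym2.eq_iff] at h
        rcases h with ⟨h1, h2⟩ | ⟨h1, h2⟩
        · exact absurd h1 (by simp)
        · -- inl m = inl y', inr x = inr (ρ n)
          have hm : m ∈ insert n A := Sum.inl_injective h1 ▸ hy'
          have hxρ : x = ρ n := Sum.inr_injective h2
          have hmA : m ∈ A := by
            rcases hm with h | h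
            · exact absurd h hmn
            · exact h
          obtain ⟨hne, hnB⟩ := hρ2 m n hmn hmA
          rcases hx with h | h
          · exact hne (hxρ ▸ h.symm).symm
          · exact hnB (hxρ ▸ h)
    · rcases hen with ⟨x', hx', h⟩ | ⟨y', hy', h⟩
      · rw [Sym2.eq_iff] at h
        rcases h with ⟨h1, h2⟩ | ⟨h1, h2⟩
        · exact absurd h1 (by simp)
        · -- inr (ρ m) = inr x', inl y = inl n
          have hn : n ∈ insert m A := Sum.inl_injective h2 ▸ hy
          have hρmx : ρ m = x' := Sum.inr_injective h1
          have hnA : n ∈ A := by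
            rcases hn with h | h
            · exact absurd h hmn.symm
            · exact h
          obtain ⟨hne, hnB⟩ := hρ2 n m (Ne.symm hmn) hnA
          rcases hx' with h | h
          · exact hne (hρmx.trans h)
          · exact hnB (hρmx ▸ h)
      · rw [Sym2.eq_iff] at h
        rcases h with ⟨h1, h2⟩ | ⟨h1, h2⟩
        · have hρ : ρ m = ρ n := Sum.inr_injective h1
          have hyy : y = y' := Sum.inl_injective h2
          have hAe : A = ∅ := (hρ1 m n hmn hρ).2
          rw [hAe] at hy hy'
          subst hyy
          rcases hy with rfl | h
          · rcases hy' with h | h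
            · exact hmn (h ▸ rfl)
            · exact h
          · exact h
        · exact absurd h1 (by simp)


lemma ncard_eq_fintype_card {γ : Type*} (s : Set γ) [Fintype s] :
    s.ncard = Fintype.card s := by
  rw [← Nat.card_coe_set_eq, Nat.card_eq_fintype_card]

lemma pq_decomp (S : Set (Fin a ⊕ Fin b)) :
    S = Sum.inl '' (Sum.inl ⁻¹' S) ∪ Sum.inr '' (Sum.inr ⁻¹' S) := by
  ext z
  cases z with
  | inl y => simp
  | inr x => simp

lemma pq_sum (S : Set (Fin a ⊕ Fin b)) :
    (Sum.inl ⁻¹' S).ncard + (Sum.inr ⁻¹' S).ncard = S.ncard := by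
  conv_rhs => rw [pq_decomp S]
  rw [Set.ncard_union_eq ?_ (Set.toFinite _) (Set.toFinite _),
    Set.ncard_image_of_injective _ Sum.inl_injective,
    Set.ncard_image_of_injective _ Sum.inr_injective]
  rw [Set.disjoint_left]
  rintro z ⟨y, _, rfl⟩ ⟨x, _, h⟩
  simp at h

lemma exists_good_rho {k : ℕ} (ha : 1 ≤ a) (hab : a ≤ b) (hk2 : 2 ≤ k)
    (hk : k ≤ b - a + 2) (S : Set (Fin a ⊕ Fin b)) (hS : S.ncard = k) :
    ∃ ρ : Fin a → Fin b,
      (∀ i j : Fin a, i ≠ j → ρ i = ρ j →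
        ρ i ∈ Sum.inr ⁻¹' S ∧ Sum.inl ⁻¹' S = ∅) ∧
      (∀ i j : Fin a, i ≠ j → i ∈ Sum.inl ⁻¹' S →
        ρ j ≠ ρ i ∧ ρ j ∉ Sum.inr ⁻¹' S) := by
  classical
  set A := Sum.inl ⁻¹' S with hA
  set B := Sum.inr ⁻¹' S with hB
  have hpq : A.ncard + B.ncard = k := by rw [pq_sum S, hS]
  have hBcard : Fintype.card ↥Bᶜ = b - B.ncard := by
    rw [Fintype.card_compl_set, ncard_eq_fintype_card]
    simp
  by_cases hq : B.ncard ≤ b - a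
  · -- injective avoiding B
    have hcard : Fintype.card (Fin a) ≤ Fintype.card ↥Bᶜ := by
      rw [hBcard, Fintype.card_fin]; omega
    obtain ⟨f⟩ := Function.Embedding.nonempty_of_card_le hcard
    refine ⟨fun i => (f i).1, ?_, ?_⟩
    · intro i j hij heq
      exact absurd (f.injective (Subtype.ext heq)) hij
    · intro i j hij _
      refine ⟨fun heq => hij (f.injective (Subtype.ext heq)).symm, (f j).2⟩
  · have hp : A.ncard ≤ 1 := by omega
    by_cases hp0 : A.ncard = 0
    · -- A empty, constant map
      have hAe : A = ∅ := by
        rw [← Set.ncard_eq_zero (Set.toFinite _)] at *; exact hp0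
      have hBne : B.Nonempty := by
        rw [Set.nonempty_iff_ne_empty]
        intro h
        rw [h, Set.ncard_empty] at hpq
        omega
      obtain ⟨w, hw⟩ := hBne
      refine ⟨fun _ => w, fun i j hij _ => ⟨hw, hAe⟩, fun i j hij hiA => ?_⟩
      rw [hAe] at hiA
      exact absurd hiA (Set.notMem_empty _)
    · -- A = {u}
      have hp1 : A.ncard = 1 := by omega
      obtain ⟨u, hu⟩ := (Set.ncard_eq_one).mp hp1
      have hBne : B.Nonempty := by
        rw [Set.nonempty_iff_ne_empty]
        intro h
        rw [h, Set.ncard_empty] at hpq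
        omega
      obtain ⟨w, hw⟩ := hBne
      have hcard : Fintype.card {j : Fin a // ¬(j = u)} ≤ Fintype.card ↥Bᶜ := by
        rw [hBcard, Fintype.card_subtype_compl, Fintype.card_subtype_eq,
          Fintype.card_fin]
        omega
      obtain ⟨f⟩ := Function.Embedding.nonempty_of_card_le hcard
      refine ⟨fun j => if h : j = u then w else (f ⟨j, h⟩).1, ?_, ?_⟩
      · intro i j hij heq
        exfalso
        have heq' : (if h : i = u then w else (f ⟨i, h⟩).1)
            = (if h : j = u then w else (f ⟨j, h⟩).1) := heq
        by_cases hi : i = u <;> by_cases hj : j = u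
        · exact hij (hi.trans hj.symm)
        · rw [dif_pos hi, dif_neg hj] at heq'
          exact (f ⟨j, hj⟩).2 (heq' ▸ hw)
        · rw [dif_neg hi, dif_pos hj] at heq'
          exact (f ⟨i, hi⟩).2 (heq'.symm ▸ hw)
        · rw [dif_neg hi, dif_neg hj] at heq'
          exact hij (congrArg Subtype.val (f.injective (Subtype.ext heq')) : i = j)
      · intro i j hij hiA
        have hi : i = u := by rw [hu] at hiA; exact hiA
        have hj : ¬(j = u) := fun h => hij (h ▸ hi ▸ rfl)
        simp only [dif_neg hj]
        constructor
        · simp only [hi, dif_pos]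
          intro heq
          exact (f ⟨j, hj⟩).2 (heq ▸ hw)
        · exact (f ⟨j, hj⟩).2

end Core


section Bounds
variable {a b : ℕ}

lemma tree_has_adj {V : Type*} {G : SimpleGraph V} (T : G.Subgraph)
    (hT : T.coe.IsTree) {x y : V} (hx : x ∈ T.verts) (hy : y ∈ T.verts)
    (hxy : x ≠ y) : ∃ z, T.Adj x z := by
  obtain ⟨wlk⟩ := hT.isConnected.preconnected ⟨x, hx⟩ ⟨y, hy⟩
  cases wlk with
  | nil => exact absurd rfl hxy
  | cons h p => exact ⟨_, h⟩

lemma idt_zero {V : Type*} (G : SimpleGraph V) (S : Set V) :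
    InternallyDisjointTrees G S 0 :=
  ⟨Fin.elim0, fun n => n.elim0, fun n => n.elim0, fun m => m.elim0, fun m => m.elim0⟩

lemma idt_bound {V : Type*} [Fintype V] [DecidableEq V] {G : SimpleGraph V}
    {S : Set V} {x y : V} (hx : x ∈ S) (hy : y ∈ S) (hxy : x ≠ y) {ℓ : ℕ}
    (h : InternallyDisjointTrees G S ℓ) : ℓ ≤ Fintype.card (Sym2 V) := by
  classical
  obtain ⟨T, htree, hsub, hvert, hedge⟩ := h
  have hex : ∀ n, ∃ e, e ∈ (T n).edgeSet := by
    intro n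
    obtain ⟨z, hz⟩ := tree_has_adj (T n) (htree n) (hsub n hx) (hsub n hy) hxy
    exact ⟨s(x, z), hz⟩
  have hinj : Function.Injective (fun n => (hex n).choose) := by
    intro m n hmn
    by_contra hne
    have hmn' : (hex m).choose = (hex n).choose := hmn
    have h1 : (hex m).choose ∈ (T m).edgeSet ∩ (T n).edgeSet :=
      ⟨(hex m).choose_spec, hmn' ▸ (hex n).choose_spec⟩
    rw [hedge m n hne] at h1
    exact h1
  simpa using Fintype.card_le_of_injective _ hinj

lemma bddAbove_idt {V : Type*} [Fintype V] [DecidableEq V] {G : SimpleGraph V}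
    {S : Set V} {x y : V} (hx : x ∈ S) (hy : y ∈ S) (hxy : x ≠ y) :
    BddAbove {ℓ | InternallyDisjointTrees G S ℓ} :=
  ⟨Fintype.card (Sym2 V), fun _ hℓ => idt_bound hx hy hxy hℓ⟩

lemma exists_two_mem {V : Type*} {S : Set V} (hS : S.Finite) (h2 : 2 ≤ S.ncard) :
    ∃ x y, x ∈ S ∧ y ∈ S ∧ x ≠ y := by
  obtain ⟨x, y, hx, hy, hxy⟩ := (Set.one_lt_ncard_iff hS).mp (by omega)
  exact ⟨x, y, hx, hy, hxy⟩

/-- every tree of an IDT family in the complete bipartite graph has a left vertex -/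
lemma tree_left_vertex {T : (completeBipartiteGraph (Fin a) (Fin b)).Subgraph}
    (hT : T.coe.IsTree) {x y : Fin a ⊕ Fin b} (hx : x ∈ T.verts) (hy : y ∈ T.verts)
    (hxy : x ≠ y) : ∃ t : Fin a, Sum.inl t ∈ T.verts := by
  obtain ⟨z, hz⟩ := tree_has_adj T hT hx hy hxy
  have hzv := hz.snd_mem
  have hxv := hz.fst_mem
  have hadj := hz.adj_sub
  cases x with
  | inl t => exact ⟨t, hxv⟩
  | inr s =>
    cases z with
    | inl t => exact ⟨t, hzv⟩
    | inr s' => simp [completeBipartiteGraph] at hadj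

lemma kappaS_lower {k : ℕ} (ha : 1 ≤ a) (hab : a ≤ b) (hk2 : 2 ≤ k)
    (hk : k ≤ b - a + 2) (S : Set (Fin a ⊕ Fin b)) (hS : S.ncard = k) :
    a ≤ kappaS (completeBipartiteGraph (Fin a) (Fin b)) S := by
  classical
  obtain ⟨ρ, hρ1, hρ2⟩ := exists_good_rho ha hab hk2 hk S hS
  have hmem : a ∈ {ℓ | InternallyDisjointTrees
      (completeBipartiteGraph (Fin a) (Fin b)) S ℓ} :=
    core_construction S ρ hρ1 hρ2
  obtain ⟨x, y, hx, hy, hxy⟩ := exists_two_mem (Set.toFinite S) (hS ▸ hk2)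
  exact le_csSup (bddAbove_idt hx hy hxy) hmem

end Bounds


section Upper
variable {a b k : ℕ}

lemma exists_S0 (ha : 1 ≤ a) (hab : a ≤ b) (hk2 : 2 ≤ k) (hk : k ≤ b - a + 2) :
    ∃ S₀ : Set (Fin a ⊕ Fin b), S₀.ncard = k ∧
      kappaS (completeBipartiteGraph (Fin a) (Fin b)) S₀ = a := by
  classical
  by_cases hkb : k ≤ b
  · -- S₀ on the right side
    set R : Set (Fin b) := Set.range (Fin.castLE hkb) with hR
    set S₀ : Set (Fin a ⊕ Fin b) := Sum.inr '' R with hS₀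
    have hcard : S₀.ncard = k := by
      rw [hS₀, Set.ncard_image_of_injective _ Sum.inr_injective, hR,
        ← Nat.card_coe_set_eq,
        Nat.card_range_of_injective (Fin.castLE_injective hkb), Nat.card_eq_fintype_card,
        Fintype.card_fin]
    have hbound : ∀ ℓ, InternallyDisjointTrees
        (completeBipartiteGraph (Fin a) (Fin b)) S₀ ℓ → ℓ ≤ a := by
      intro ℓ hidt
      obtain ⟨x, y, hx, hy, hxy⟩ := exists_two_mem (Set.toFinite S₀) (by omega)
      obtain ⟨T, htree, hsub, hvert, hedge⟩ := hidt
      have hex : ∀ n, ∃ t : Fin a, Sum.inl t ∈ (T n).verts := fun n =>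
        tree_left_vertex (htree n) (hsub n hx) (hsub n hy) hxy
      have hinj : Function.Injective (fun n => (hex n).choose) := by
        intro m n hmn
        by_contra hne
        have hmn' : (hex m).choose = (hex n).choose := hmn
        have h1 : Sum.inl (hex m).choose ∈ (T m).verts ∩ (T n).verts :=
          ⟨(hex m).choose_spec, by rw [hmn']; exact (hex n).choose_spec⟩
        rw [hvert m n hne] at h1
        obtain ⟨r, _, hr⟩ := h1
        simp at hr
      simpa using Fintype.card_le_of_injective _ hinj
    refine ⟨S₀, hcard, le_antisymm ?_ (kappaS_lower ha hab hk2 hk S₀ hcard)⟩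
    exact csSup_le ⟨0, idt_zero _ _⟩ hbound
  · -- a = 1, k = b + 1, S₀ = univ
    have ha1 : a = 1 := by omega
    have hkb1 : k = b + 1 := by omega
    have hb1 : 1 ≤ b := by omega
    set S₀ : Set (Fin a ⊕ Fin b) := Set.univ with hS₀
    have hcard : S₀.ncard = k := by
      rw [hS₀, Set.ncard_univ, Nat.card_eq_fintype_card, Fintype.card_sum,
        Fintype.card_fin, Fintype.card_fin]
      omega
    have hbound : ∀ ℓ, InternallyDisjointTrees
        (completeBipartiteGraph (Fin a) (Fin b)) S₀ ℓ → ℓ ≤ a := by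
      intro ℓ hidt
      rw [ha1]
      by_contra hℓ
      push_neg at hℓ
      obtain ⟨T, htree, hsub, hvert, hedge⟩ := hidt
      have hkey : ∀ n, (T n).Adj (Sum.inr ⟨0, hb1⟩) (Sum.inl ⟨0, ha⟩) := by
        intro n
        have h1 : (Sum.inr ⟨0, hb1⟩ : Fin a ⊕ Fin b) ∈ (T n).verts :=
          hsub n (Set.mem_univ _)
        have h2 : (Sum.inl ⟨0, ha⟩ : Fin a ⊕ Fin b) ∈ (T n).verts :=
          hsub n (Set.mem_univ _)
        obtain ⟨z, hz⟩ := tree_has_adj (T n) (htree n) h1 h2 (by simp)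
        have hadj := hz.adj_sub
        cases z with
        | inl t =>
          have ht : t = ⟨0, ha⟩ := by
            ext
            have := t.isLt
            omega
          exact ht ▸ hz
        | inr s' => simp [completeBipartiteGraph] at hadj
      have hne : (⟨0, by omega⟩ : Fin ℓ) ≠ ⟨1, by omega⟩ := by
        intro h
        simp [Fin.mk.injEq] at h
      have h1 : s(Sum.inr ⟨0, hb1⟩, Sum.inl ⟨0, ha⟩) ∈
          (T ⟨0, by omega⟩).edgeSet ∩ (T ⟨1, by omega⟩).edgeSet :=
        ⟨hkey _, hkey _⟩
      rw [hedge _ _ hne] at h1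
      exact h1
    refine ⟨S₀, hcard, le_antisymm ?_ (kappaS_lower ha hab hk2 hk S₀ hcard)⟩
    exact csSup_le ⟨0, idt_zero _ _⟩ hbound

end Upper

theorem stmt_8 (a b k : ℕ) (ha : 1 ≤ a) (hab : a ≤ b) (hk2 : 2 ≤ k)
    (hk : k ≤ b - a + 2) :
    kappaK (completeBipartiteGraph (Fin a) (Fin b)) k = a := by
  obtain ⟨S₀, hcard, hkS₀⟩ := exists_S0 ha hab hk2 hk
  have hmem : a ∈ {n | ∃ S : Set (Fin a ⊕ Fin b), S.ncard = k ∧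
      kappaS (completeBipartiteGraph (Fin a) (Fin b)) S = n} := ⟨S₀, hcard, hkS₀⟩
  refine le_antisymm (Nat.sInf_le hmem) (le_csInf ⟨a, hmem⟩ ?_)
  rintro n ⟨S, hS, rfl⟩
  exact kappaS_lower ha hab hk2 hk S hS
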